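/- Let Q^τ : X^τ × A → ℝ be L_Q-Lipschitz in the action argument, π^τ a policy on X^τ, and V^τ(x^τ) = E_{a∼π^τ(·|x^τ)}[Q^τ(x^τ,a)]. Let π be a policy on X and b a kernel from X to X^τ. Then for every x, E_{x^τ∼b(·|x), a∼π(·|x)}[V^τ(x^τ) − Q^τ(x^τ,a)] ≤ L_Q · E_{x^τ∼b(·|x)}[W₁(π^τ(·|x^τ), π(·|x))]. -/

import Mathlib

open scoped ENNReal

/-- Expectation of a real-valued function under a `PMF` on a finite type. -/
noncomputable def Epmf {α : Type*} [Fintype α] (μ : PMF α) (f : α → ℝ) : ℝ :=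
  ∑ a, (μ a).toReal * f a

/-- The L1-Wasserstein distance between two probability distributions on a finite
metric space, defined via couplings. -/
noncomputable def W1 {α : Type*} [Fintype α] [MetricSpace α] (μ ν : PMF α) : ℝ :=
  sInf { c | ∃ κ : PMF (α × α), PMF.map Prod.fst κ = μ ∧ PMF.map Prod.snd κ = ν ∧
      Epmf κ (fun p => dist p.1 p.2) = c }

lemma Epmf_sum_toReal {α : Type*} [Fintype α] (μ : PMF α) :
    ∑ a, (μ a).toReal = 1 := by
  have h := μ.tsum_coe
  rw [tsum_fintype] at h
  have : (∑ a, μ a).toReal = (1 : ℝ≥0∞).toReal := by rw [h]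
  rwa [ENNReal.toReal_sum (fun a _ => μ.apply_ne_top a), ENNReal.toReal_one] at this

lemma Epmf_const {α : Type*} [Fintype α] (μ : PMF α) (c : ℝ) :
    Epmf μ (fun _ => c) = c := by
  simp [Epmf, ← Finset.sum_mul, Epmf_sum_toReal]

lemma Epmf_mono {α : Type*} [Fintype α] (μ : PMF α) {f g : α → ℝ}
    (h : ∀ a, f a ≤ g a) : Epmf μ f ≤ Epmf μ g := by
  refine Finset.sum_le_sum fun a _ => ?_
  exact mul_le_mul_of_nonneg_left (h a) ENNReal.toReal_nonneg

lemma Epmf_nonneg {α : Type*} [Fintype α] (μ : PMF α) {f : α → ℝ}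
    (h : ∀ a, 0 ≤ f a) : 0 ≤ Epmf μ f := by
  have := Epmf_mono μ (f := fun _ => 0) (g := f) h
  rwa [Epmf_const] at this

lemma Epmf_map {α β : Type*} [Fintype α] [Fintype β] (κ : PMF β) (f : β → α) (g : α → ℝ) :
    Epmf (κ.map f) g = Epmf κ (fun b => g (f b)) := by
  classical
  simp only [Epmf, PMF.map_apply, tsum_fintype]
  have h : ∀ a : α, (∑ b, if a = f b then κ b else 0).toReal
      = ∑ b, if a = f b then (κ b).toReal else 0 := by
    intro a
    rw [ENNReal.toReal_sum (fun b _ => by split; exacts [κ.apply_ne_top b, ENNReal.zero_ne_top])]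
    exact Finset.sum_congr rfl fun b _ => by split <;> simp
  calc ∑ a, (∑ b, if a = f b then κ b else 0).toReal * g a
      = ∑ a, ∑ b, (if a = f b then (κ b).toReal * g a else 0) := by
        refine Finset.sum_congr rfl fun a _ => ?_
        rw [h, Finset.sum_mul]
        exact Finset.sum_congr rfl fun b _ => by split <;> simp
    _ = ∑ b, ∑ a, (if a = f b then (κ b).toReal * g a else 0) := Finset.sum_comm
    _ = ∑ b, (κ b).toReal * g (f b) := by
        refine Finset.sum_congr rfl fun b _ => ?_
        simp

lemma Epmf_mul_const {α : Type*} [Fintype α] (μ : PMF α) (c : ℝ) (f : α → ℝ) :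
    Epmf μ (fun a => c * f a) = c * Epmf μ f := by
  simp only [Epmf, Finset.mul_sum]
  exact Finset.sum_congr rfl fun a _ => by ring

lemma Epmf_sub {α : Type*} [Fintype α] (μ : PMF α) (f g : α → ℝ) :
    Epmf μ (fun a => f a - g a) = Epmf μ f - Epmf μ g := by
  simp only [Epmf, mul_sub]
  exact Finset.sum_sub_distrib ..

lemma Epmf_sub_const {α : Type*} [Fintype α] (μ : PMF α) (c : ℝ) (f : α → ℝ) :
    Epmf μ (fun a => c - f a) = c - Epmf μ f := by
  rw [Epmf_sub, Epmf_const]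

lemma coupling_exists {α : Type*} (μ ν : PMF α) :
    ∃ κ : PMF (α × α), PMF.map Prod.fst κ = μ ∧ PMF.map Prod.snd κ = ν := by
  refine ⟨μ.bind (fun a => ν.map (Prod.mk a)), ?_, ?_⟩
  · rw [PMF.map_bind]
    have : ∀ a : α, (ν.map (Prod.mk a)).map Prod.fst = pure a := fun a => by
      rw [PMF.map_comp]
      exact PMF.map_const ν a
    simp only [this]
    exact PMF.bind_pure μ
  · rw [PMF.map_bind]
    have : ∀ a : α, (ν.map (Prod.mk a)).map Prod.snd = ν := fun a => by
      rw [PMF.map_comp]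
      exact PMF.map_id ν
    simp only [this]
    exact PMF.bind_const μ ν

/-- Key pointwise bound. -/
lemma key_bound {A : Type*} [Fintype A] [MetricSpace A]
    (Q : A → ℝ) (LQ : ℝ) (hQ : ∀ a₁ a₂, |Q a₁ - Q a₂| ≤ LQ * dist a₁ a₂)
    (μ ν : PMF A) :
    Epmf ν (fun a => Epmf μ Q - Q a) ≤ LQ * W1 μ ν := by
  set S := { c | ∃ κ : PMF (A × A), PMF.map Prod.fst κ = μ ∧ PMF.map Prod.snd κ = ν ∧
      Epmf κ (fun p => dist p.1 p.2) = c } with hS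
  have hne : S.Nonempty := by
    obtain ⟨κ, h1, h2⟩ := coupling_exists μ ν
    exact ⟨_, κ, h1, h2, rfl⟩
  rw [Epmf_sub_const]
  have hbound : ∀ c ∈ S, Epmf μ Q - Epmf ν Q ≤ LQ * c := by
    rintro c ⟨κ, hfst, hsnd, rfl⟩
    have hμ : Epmf μ Q = Epmf κ (fun p => Q p.1) := by rw [← hfst, Epmf_map]
    have hν : Epmf ν Q = Epmf κ (fun p => Q p.2) := by rw [← hsnd, Epmf_map]
    rw [hμ, hν, ← Epmf_sub, ← Epmf_mul_const]
    exact Epmf_mono κ fun p => (le_abs_self _).trans (hQ p.1 p.2)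
  rcases subsingleton_or_nontrivial A with hsub | hnt
  · -- subsingleton: W1 = 0 and LHS = 0
    have hμν : μ = ν := by
      ext a
      have h1 := μ.tsum_coe
      have h2 := ν.tsum_coe
      rw [tsum_eq_single a (fun b hb => absurd (Subsingleton.elim b a) hb)] at h1
      rw [tsum_eq_single a (fun b hb => absurd (Subsingleton.elim b a) hb)] at h2
      rw [h1, h2]
    have hW : W1 μ ν = 0 := by
      have hSsub : S = {0} := by
        apply Set.eq_singleton_iff_nonempty_unique_mem.mpr
        refine ⟨hne, ?_⟩
        rintro c ⟨κ, -, -, rfl⟩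
        have : ∀ p : A × A, dist p.1 p.2 = 0 := fun p =>
          dist_eq_zero.mpr (Subsingleton.elim _ _)
        simp only [this]
        exact Epmf_const κ 0
      rw [W1, ← hS, hSsub, csInf_singleton]
    rw [hW, mul_zero, hμν, sub_self]
  · obtain ⟨a₁, a₂, hne12⟩ := hnt
    have hd : 0 < dist a₁ a₂ := dist_pos.mpr hne12
    have hLQ : 0 ≤ LQ := by
      by_contra h
      push_neg at h
      exact absurd ((abs_nonneg _).trans (hQ a₁ a₂))
        (not_le.mpr (mul_neg_of_neg_of_pos h hd))
    have : W1 μ ν = sInf S := rfl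
    rw [this, ← smul_eq_mul, ← Real.sInf_smul_of_nonneg hLQ]
    apply le_csInf (hne.smul_set)
    rintro b ⟨c, hc, rfl⟩
    simpa [smul_eq_mul] using hbound c hc


/-- Delayed performance difference bound. -/
theorem delayed_performance_difference_bound
    {X Xτ A : Type*} [Fintype Xτ] [Fintype A] [MetricSpace A]
    (Qτ : Xτ → A → ℝ) (LQ : ℝ)
    (hLip : ∀ (xτ : Xτ) (a₁ a₂ : A), |Qτ xτ a₁ - Qτ xτ a₂| ≤ LQ * dist a₁ a₂)
    (πτ : Xτ → PMF A) (π : X → PMF A) (b : X → PMF Xτ)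
    (Vτ : Xτ → ℝ)
    (hVτ : ∀ xτ, Vτ xτ = Epmf (πτ xτ) (fun a => Qτ xτ a)) :
    ∀ x : X,
      Epmf (b x) (fun xτ => Epmf (π x) (fun a => Vτ xτ - Qτ xτ a))
        ≤ LQ * Epmf (b x) (fun xτ => W1 (πτ xτ) (π x)) := by
  intro x
  rw [← Epmf_mul_const]
  refine Epmf_mono (b x) fun xτ => ?_
  rw [hVτ xτ]
  exact key_bound (Qτ xτ) LQ (hLip xτ) (πτ xτ) (π x)
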